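/- Let h : ℝ² → ℝ be of class C² with h(x+1, x̄+1) = h(x, x̄) and h₁₂(x, x̄) < 0 for all (x, x̄) ∈ ℝ². Let φ : ℝ → ℝ be an increasing bi-Lipschitz homeomorphism with φ(x+1) = φ(x) + 1 satisfying h₂(φ⁻¹(x), x) + h₁(x, φ(x)) = 0 for all x ∈ ℝ. Define a(x) = h₂₂(φ⁻¹(x), x) + h₁₁(x, φ(x)) and b(x) = −h₁₂(φ⁻¹(x), x). Then for almost every x ∈ ℝ, a(x) = b(φ(x))·φ'(x) + b(x)/φ'(φ⁻¹(x)). -/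

import Mathlib

open MeasureTheory

/-- Partial derivative of `h` with respect to its first argument. -/
noncomputable def h1 (h : ℝ → ℝ → ℝ) (x y : ℝ) : ℝ := deriv (fun u => h u y) x

/-- Partial derivative of `h` with respect to its second argument. -/
noncomputable def h2 (h : ℝ → ℝ → ℝ) (x y : ℝ) : ℝ := deriv (fun v => h x v) y

/-- Second partial derivative of `h` with respect to its first argument, twice. -/
noncomputable def h11 (h : ℝ → ℝ → ℝ) (x y : ℝ) : ℝ := deriv (fun u => h1 h u y) x

/-- Mixed second partial derivative of `h`. -/
noncomputable def h12 (h : ℝ → ℝ → ℝ) (x y : ℝ) : ℝ := deriv (fun v => h1 h x v) y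

/-- Second partial derivative of `h` with respect to its second argument, twice. -/
noncomputable def h22 (h : ℝ → ℝ → ℝ) (x y : ℝ) : ℝ := deriv (fun v => h2 h x v) y

/-- the differentiated Euler–Lagrange equation
`a(x) = b(φ(x))·φ'(x) + b(x)/φ'(φ⁻¹(x))` holds for almost every `x`. -/
theorem differentiated_euler_lagrange (h : ℝ → ℝ → ℝ)
    (hC2 : ContDiff ℝ 2 (fun p : ℝ × ℝ => h p.1 p.2))
    (hper : ∀ x y, h (x + 1) (y + 1) = h x y)
    (htwist : ∀ x y, h12 h x y < 0)
    (φ ψ : ℝ → ℝ) (hmono : StrictMono φ) (K : NNReal)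
    (hlip : LipschitzWith K φ) (halip : AntilipschitzWith K φ)
    (hlinv : Function.LeftInverse ψ φ) (hrinv : Function.RightInverse ψ φ)
    (hcomm : ∀ x, φ (x + 1) = φ x + 1)
    (hEL : ∀ x, h2 h (ψ x) x + h1 h x (φ x) = 0)
    (a b : ℝ → ℝ)
    (ha : ∀ x, a x = h22 h (ψ x) x + h11 h x (φ x))
    (hb : ∀ x, b x = -h12 h (ψ x) x) :
    ∀ᵐ x : ℝ, a x = b (φ x) * deriv φ x + b x / deriv φ (ψ x) := by
  classical
  set f : ℝ × ℝ → ℝ := fun p => h p.1 p.2 with hfdef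
  have hdiff : Differentiable ℝ f := hC2.differentiable (by norm_num)
  set F' : ℝ × ℝ → (ℝ × ℝ) →L[ℝ] ℝ := fderiv ℝ f with hF'def
  have hF'C1 : ContDiff ℝ 1 F' := hC2.fderiv_right (by norm_num)
  have hF'diff : Differentiable ℝ F' := hF'C1.differentiable (by norm_num)
  -- curves
  have hcurve1 : ∀ x y : ℝ, HasDerivAt (fun u : ℝ => (u, y)) ((1:ℝ), (0:ℝ)) x :=
    fun x y => HasDerivAt.prodMk (hasDerivAt_id x) (hasDerivAt_const x y)
  have hcurve2 : ∀ x y : ℝ, HasDerivAt (fun v : ℝ => (x, v)) ((0:ℝ), (1:ℝ)) y :=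
    fun x y => HasDerivAt.prodMk (hasDerivAt_const y x) (hasDerivAt_id y)
  -- first partials
  have hder1 : ∀ x y : ℝ, HasDerivAt (fun u => h u y) (F' (x,y) (1,0)) x :=
    fun x y => ((hdiff (x,y)).hasFDerivAt).comp_hasDerivAt (l := f) (f := fun u : ℝ => (u, y)) x (hcurve1 x y)
  have hder2 : ∀ x y : ℝ, HasDerivAt (fun v => h x v) (F' (x,y) (0,1)) y :=
    fun x y => ((hdiff (x,y)).hasFDerivAt).comp_hasDerivAt y (hcurve2 x y)
  have h1eq : ∀ x y : ℝ, h1 h x y = F' (x,y) (1,0) := fun x y => (hder1 x y).deriv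
  have h2eq : ∀ x y : ℝ, h2 h x y = F' (x,y) (0,1) := fun x y => (hder2 x y).deriv
  -- second partials via fderiv of F'
  set F'' : ℝ × ℝ → (ℝ × ℝ) →L[ℝ] (ℝ × ℝ) →L[ℝ] ℝ := fderiv ℝ F' with hF''def
  have hsymm : ∀ (p v w : ℝ × ℝ), F'' p v w = F'' p w v :=
    fun p => second_derivative_symmetric (fun y => (hdiff y).hasFDerivAt) (hF'diff p).hasFDerivAt
  -- g v p = F' p v as a function of p, has fderiv (apply v).comp (F'' p)
  have hgfd : ∀ (v : ℝ × ℝ) (p : ℝ × ℝ),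
      HasFDerivAt (fun q => F' q v)
        ((ContinuousLinearMap.apply ℝ ℝ v).comp (F'' p)) p :=
    fun v p => (ContinuousLinearMap.apply ℝ ℝ v).hasFDerivAt.comp p (hF'diff p).hasFDerivAt
  have h11eq : ∀ x y : ℝ, h11 h x y = F'' (x,y) (1,0) (1,0) := by
    intro x y
    have hfun : (fun u => h1 h u y) = fun u => F' (u, y) (1,0) := funext fun u => h1eq u y
    have : HasDerivAt (fun u => F' (u, y) ((1:ℝ),(0:ℝ))) (F'' (x,y) (1,0) (1,0)) x :=
      (hgfd (1,0) (x,y)).comp_hasDerivAt (f := fun u : ℝ => (u, y)) x (hcurve1 x y)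
    simp only [h11, hfun]
    exact this.deriv
  have h12eq : ∀ x y : ℝ, h12 h x y = F'' (x,y) (0,1) (1,0) := by
    intro x y
    have hfun : (fun v => h1 h x v) = fun v => F' (x, v) (1,0) := funext fun v => h1eq x v
    have : HasDerivAt (fun v => F' (x, v) ((1:ℝ),(0:ℝ))) (F'' (x,y) (0,1) (1,0)) y :=
      (hgfd (1,0) (x,y)).comp_hasDerivAt y (hcurve2 x y)
    simp only [h12, hfun]
    exact this.deriv
  have h22eq : ∀ x y : ℝ, h22 h x y = F'' (x,y) (0,1) (0,1) := by
    intro x y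
    have hfun : (fun v => h2 h x v) = fun v => F' (x, v) (0,1) := funext fun v => h2eq x v
    have : HasDerivAt (fun v => F' (x, v) ((0:ℝ),(1:ℝ))) (F'' (x,y) (0,1) (0,1)) y :=
      (hgfd (0,1) (x,y)).comp_hasDerivAt y (hcurve2 x y)
    simp only [h22, hfun]
    exact this.deriv
  -- measure-theoretic setup
  have hψlip : LipschitzWith K ψ := halip.to_rightInverse hrinv
  have hφae := hlip.ae_differentiableAt_real
  have hψae := hψlip.ae_differentiableAt_real
  have hN : volume {z : ℝ | ¬ DifferentiableAt ℝ φ z} = 0 := ae_iff.mp hφae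
  have himg : volume (φ '' {z : ℝ | ¬ DifferentiableAt ℝ φ z}) = 0 := by
    have h1 := hlip.hausdorffMeasure_image_le (d := 1) zero_le_one
      {z : ℝ | ¬ DifferentiableAt ℝ φ z}
    rw [MeasureTheory.hausdorffMeasure_real, hN] at h1
    simpa using h1
  have hmem : ∀ᵐ x : ℝ, DifferentiableAt ℝ φ (ψ x) := by
    rw [ae_iff]
    refine measure_mono_null ?_ himg
    intro x hx
    exact ⟨ψ x, hx, hrinv x⟩
  filter_upwards [hφae, hψae, hmem] with x hφx hψx hφψx
  set dφ := deriv φ x with hdφ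
  set dψ := deriv ψ x with hdψ
  set d₁ := deriv φ (ψ x) with hd₁
  have hφx' : HasDerivAt φ dφ x := hφx.hasDerivAt
  have hψx' : HasDerivAt ψ dψ x := hψx.hasDerivAt
  have hφψ' : HasDerivAt φ d₁ (ψ x) := hφψx.hasDerivAt
  -- chain rule : d₁ * dψ = 1
  have hchain : d₁ * dψ = 1 := by
    have hc : HasDerivAt (fun t => φ (ψ t)) (d₁ * dψ) x := hφψ'.comp x hψx'
    have hid : (fun t => φ (ψ t)) = fun t => t := funext hrinv
    rw [hid] at hc
    exact hc.unique (hasDerivAt_id x)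
  have hd₁ne : d₁ ≠ 0 := left_ne_zero_of_mul_eq_one hchain
  have hdψeq : dψ = d₁⁻¹ := eq_inv_of_mul_eq_one_right hchain
  -- derivative of the EL identity
  have hzero : HasDerivAt (fun t => F' (ψ t, t) (0,1) + F' (t, φ t) (1,0)) 0 x := by
    have hfun : (fun t => F' (ψ t, t) ((0:ℝ),(1:ℝ)) + F' (t, φ t) ((1:ℝ),(0:ℝ))) = fun _ => 0 := by
      funext t
      rw [← h2eq, ← h1eq]
      exact hEL t
    rw [hfun]
    exact hasDerivAt_const x 0
  have hc2 : HasDerivAt (fun t : ℝ => (ψ t, t)) ((dψ, (1:ℝ)) : ℝ × ℝ) x :=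
    HasDerivAt.prodMk hψx' (hasDerivAt_id x)
  have hc1 : HasDerivAt (fun t : ℝ => (t, φ t)) (((1:ℝ), dφ) : ℝ × ℝ) x :=
    HasDerivAt.prodMk (hasDerivAt_id x) hφx'
  have hDa : HasDerivAt (fun t => F' (ψ t, t) ((0:ℝ),(1:ℝ))) (F'' (ψ x, x) (dψ, 1) (0,1)) x :=
    HasFDerivAt.comp_hasDerivAt (f := fun t : ℝ => (ψ t, t)) x (hgfd (0,1) (ψ x, x)) hc2
  have hDb : HasDerivAt (fun t => F' (t, φ t) ((1:ℝ),(0:ℝ))) (F'' (x, φ x) (1, dφ) (1,0)) x :=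
    HasFDerivAt.comp_hasDerivAt (f := fun t : ℝ => (t, φ t)) x (hgfd (1,0) (x, φ x)) hc1
  have hD : HasDerivAt (fun t => F' (ψ t, t) (0,1) + F' (t, φ t) (1,0))
      (F'' (ψ x, x) (dψ, 1) (0,1) + F'' (x, φ x) (1, dφ) (1,0)) x := hDa.add hDb
  have hkey : F'' (ψ x, x) (dψ, 1) (0,1) + F'' (x, φ x) (1, dφ) (1,0) = 0 :=
    hD.unique hzero
  -- expand linearity
  have hexp2 : F'' (ψ x, x) ((dψ, 1) : ℝ × ℝ) (0,1)
      = dψ * F'' (ψ x, x) (0,1) (1,0) + F'' (ψ x, x) (0,1) (0,1) := by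
    have hv : ((dψ, (1:ℝ)) : ℝ × ℝ) = dψ • ((1:ℝ),(0:ℝ)) + ((0:ℝ),(1:ℝ)) := by
      simp [Prod.ext_iff]
    rw [hv]
    simp only [map_add, ContinuousLinearMap.map_smul, ContinuousLinearMap.add_apply,
      ContinuousLinearMap.smul_apply, smul_eq_mul]
    rw [hsymm (ψ x, x) (1,0) (0,1)]
  have hexp1 : F'' (x, φ x) (((1:ℝ), dφ) : ℝ × ℝ) (1,0)
      = F'' (x, φ x) (1,0) (1,0) + dφ * F'' (x, φ x) (0,1) (1,0) := by
    have hv : (((1:ℝ), dφ) : ℝ × ℝ) = ((1:ℝ),(0:ℝ)) + dφ • ((0:ℝ),(1:ℝ)) := by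
      simp [Prod.ext_iff]
    rw [hv]
    simp only [map_add, ContinuousLinearMap.map_smul, ContinuousLinearMap.add_apply,
      ContinuousLinearMap.smul_apply, smul_eq_mul]
  -- assemble
  have hbφ : b (φ x) = -F'' (x, φ x) (0,1) (1,0) := by
    rw [hb, hlinv x, h12eq]
  have hbx : b x = -F'' (ψ x, x) (0,1) (1,0) := by rw [hb, h12eq]
  have hax : a x = F'' (ψ x, x) (0,1) (0,1) + F'' (x, φ x) (1,0) (1,0) := by
    rw [ha, h22eq, h11eq]
  rw [hexp2, hexp1] at hkey
  rw [hax, hbφ, hbx, div_eq_mul_inv, ← hdψeq]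
  linarith [hkey]
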